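/- arXiv:2212.11608 — 3 statements merged into one kernel-verified Lean document; each statement's English description precedes it below -/
import Mathlib

section
/- For n ≥ 2 even, the proportion δ(T) of permutations in S_n whose cycle decomposition contains exactly one transposition and no other cycle of even length equals (n−2)! / (2^{n-1} · ((n−2)/2)!^2); for n ≥ 3 odd, it equals (n−3)! / (2^{n-2} · ((n−3)/2)!^2). -/
open Equiv Equiv.Perm Finset
set_option linter.unusedSectionVars false
set_option maxHeartbeats 1000000
variable {α : Type} [DecidableEq α] [Fintype α]
variable {α : Type} [DecidableEq α] [Fintype α]

private def Aseq : ℕ → ℕ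
  | 0 => 1
  | 1 => 1
  | n + 2 => Aseq (n + 1) + (n + 1) * n * Aseq n


private lemma isCycle_mul_swap {f : Perm α} (hf : f.IsCycle) {x b : α}
    (hx : x ∈ f.support) (hb : b ∉ f.support) :
    (f * Equiv.swap x b).IsCycle ∧ (f * Equiv.swap x b).support = insert b f.support := by
  have hbx : b ≠ x := fun h => hb (h ▸ hx)
  have hfb : f b = b := notMem_support.1 hb
  have hfx : f x ≠ x := mem_support.1 hx
  set g := f * Equiv.swap x b with hg
  have hgx : g x = b := by simp [hg, mul_apply, hfb]
  have hgb : g b = f x := by simp [hg, mul_apply, swap_apply_right]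
  have hgz : ∀ z, z ≠ x → z ≠ b → g z = f z := fun z h1 h2 => by
    simp [hg, mul_apply, swap_apply_of_ne_of_ne h1 h2]
  have hfxb : f x ≠ b := fun h => hb (h ▸ (apply_mem_support.2 hx))
  have hsupp : g.support = insert b f.support := by
    ext z
    rcases eq_or_ne z x with rfl | hzx
    · simp only [mem_support, hgx, mem_insert]
      tauto
    rcases eq_or_ne z b with rfl | hzb
    · simp only [mem_support, hgb, mem_insert]
      tauto
    · rw [mem_support, hgz z hzx hzb, mem_insert, ← mem_support]
      tauto
  refine ⟨⟨x, by rw [hgx]; exact hbx, fun z hz => ?_⟩, hsupp⟩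
  have aux : ∀ k : ℕ, ∃ m : ℕ, (g ^ m) x = (f ^ k) x := by
    intro k
    induction k with
    | zero => exact ⟨0, rfl⟩
    | succ k ih =>
      obtain ⟨m, hm⟩ := ih
      rcases eq_or_ne ((f ^ k) x) x with h | h
      · refine ⟨2, ?_⟩
        rw [pow_succ' f k, mul_apply, h, pow_two, mul_apply, hgx, hgb]
      · have hzs : (f ^ k) x ∈ f.support := pow_apply_mem_support.2 hx
        have h2 : (f ^ k) x ≠ b := fun hh => hb (hh ▸ hzs)
        refine ⟨m + 1, ?_⟩
        rw [pow_succ', mul_apply, hm, hgz _ h h2, ← mul_apply, ← pow_succ']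
  rcases eq_or_ne z x with rfl | hzx
  · exact ⟨0, rfl⟩
  rcases eq_or_ne z b with rfl | hzb
  · exact ⟨1, by rwa [zpow_one]⟩
  · have hfz : f z ≠ z := by rw [← hgz z hzx hzb]; exact hz
    obtain ⟨k, hk⟩ := hf.exists_pow_eq hfx hfz
    obtain ⟨m, hm⟩ := aux k
    exact ⟨(m : ℤ), by rw [zpow_natCast, hm, hk]⟩


private lemma odd_add_two' {L : ℕ} : Odd (L + 2) ↔ Odd L := by
  rw [Nat.odd_iff, Nat.odd_iff]; omega

private lemma ao_mul_insert (τ : Perm α) (x y w : α) (hxy : x ≠ y) (hwx : w ≠ x)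
    (hwy : w ≠ y) (hx : τ x = x) (hy : τ y = y) :
    ((∀ m ∈ (τ * (Equiv.swap w x * Equiv.swap x y)).cycleType, Odd m) ↔
      (∀ m ∈ τ.cycleType, Odd m)) := by
  have hyw : y ∉ support (Equiv.swap w x) := by
    rw [support_swap hwx]
    simp [hwy.symm, hxy.symm]
  have hxw : x ∈ support (Equiv.swap w x) := by
    rw [support_swap hwx]; simp
  by_cases hw : τ w = w
  · -- the 3-cycle is disjoint from τ
    obtain ⟨hc, hcs⟩ := isCycle_mul_swap (isCycle_swap hwx) hxw hyw
    have hdisj : τ.Disjoint (Equiv.swap w x * Equiv.swap x y) := by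
      intro a
      by_cases ha : a ∈ (Equiv.swap w x * Equiv.swap x y).support
      · left
        rw [hcs, support_swap hwx, mem_insert, mem_insert, mem_singleton] at ha
        rcases ha with rfl | rfl | rfl <;> assumption
      · right; exact notMem_support.1 ha
    have hcard : (Equiv.swap w x * Equiv.swap x y).support.card = 3 := by
      rw [hcs, support_swap hwx]
      rw [card_insert_of_notMem (by simp [hwy.symm, hxy.symm]),
        card_insert_of_notMem (by simp [hwx]), card_singleton]
    rw [hdisj.cycleType_mul, hc.cycleType, hcard]
    constructor
    · intro h m hm; exact h m (Multiset.mem_add.2 (Or.inl hm))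
    · intro h m hm
      rcases Multiset.mem_add.1 hm with hm | hm
      · exact h m hm
      · simp only [Multiset.mem_singleton] at hm
        subst hm; decide
  · set e := τ.cycleOf w with he_def
    have he : e.IsCycle := isCycle_cycleOf τ hw
    have hmem : e ∈ τ.cycleFactorsFinset := cycleOf_mem_cycleFactorsFinset_iff.2 (mem_support.2 hw)
    have hρe : (τ * e⁻¹).Disjoint e := disjoint_mul_inv_of_mem_cycleFactorsFinset hmem
    set ρ := τ * e⁻¹ with hρ_def
    have hτeq : ρ * e = τ := inv_mul_cancel_right τ e
    have hxs : x ∉ e.support := fun h => (mem_support.1 (support_cycleOf_le τ w h)) hx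
    have hys : y ∉ e.support := fun h => (mem_support.1 (support_cycleOf_le τ w h)) hy
    have hws : w ∈ e.support := mem_support.2 (by rw [he_def, cycleOf_apply_self]; exact hw)
    obtain ⟨h1c, h1s⟩ := isCycle_mul_swap he hws hxs
    have hx1 : x ∈ (e * Equiv.swap w x).support := by rw [h1s]; exact mem_insert_self _ _
    have hy1 : y ∉ (e * Equiv.swap w x).support := by
      rw [h1s, mem_insert]
      push_neg
      exact ⟨hxy.symm, hys⟩
    obtain ⟨h2c, h2s⟩ := isCycle_mul_swap h1c hx1 hy1
    rw [mul_assoc] at h2c h2s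
    have hDs : (e * (Equiv.swap w x * Equiv.swap x y)).support = insert y (insert x e.support) := by
      rw [h2s, h1s]
    have hD : τ * (Equiv.swap w x * Equiv.swap x y) = ρ * (e * (Equiv.swap w x * Equiv.swap x y)) := by
      rw [← hτeq, mul_assoc]
    have hinv : ∀ a, a ∉ e.support → ρ a = τ a := by
      intro a ha
      rw [hρ_def, mul_apply]
      have : e⁻¹ a = a := by
        rw [← support_inv] at ha
        exact notMem_support.1 ha
      rw [this]
    have hdisj : ρ.Disjoint (e * (Equiv.swap w x * Equiv.swap x y)) := by
      intro a
      by_cases ha : a ∈ (e * (Equiv.swap w x * Equiv.swap x y)).support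
      · left
        rw [hDs, mem_insert, mem_insert] at ha
        rcases ha with rfl | rfl | ha
        · rw [hinv a hys]; exact hy
        · rw [hinv a hxs]; exact hx
        · exact (hρe a).resolve_right (mem_support.1 ha)
      · right; exact notMem_support.1 ha
    have hcardD : (e * (Equiv.swap w x * Equiv.swap x y)).support.card = e.support.card + 2 := by
      rw [hDs, card_insert_of_notMem (by rw [mem_insert]; push_neg; exact ⟨hxy.symm, hys⟩),
        card_insert_of_notMem hxs]
    have hτct : τ.cycleType = ρ.cycleType + {e.support.card} := by
      rw [← hτeq, hρe.cycleType_mul, he.cycleType]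
    rw [hD, hdisj.cycleType_mul, h2c.cycleType, hcardD, hτct]
    have hmemiff : ∀ (L : ℕ) (m : ℕ), m ∈ ρ.cycleType + ({L} : Multiset ℕ) ↔ m ∈ ρ.cycleType ∨ m = L := by
      intro L m
      rw [Multiset.mem_add, Multiset.mem_singleton]
    constructor
    · intro h m hm
      rcases (hmemiff _ m).1 hm with hm' | rfl
      · exact h m (by rw [Multiset.mem_add]; left; exact hm')
      · have h3 := h (e.support.card + 2) (by
          rw [Multiset.mem_add]; right
          simp)
        exact odd_add_two'.1 h3
    · intro h m hm
      rcases Multiset.mem_add.1 hm with hm' | hm'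
      · exact h m (Multiset.mem_add.2 (Or.inl hm'))
      · simp only [Multiset.mem_singleton] at hm'
        subst hm'
        exact odd_add_two'.2 (h _ ((hmemiff _ _).2 (Or.inr rfl)))


private lemma iff_of_fix {σ : Perm α} {p : α → Prop} (h : ∀ a, ¬ p a → σ a = a) :
    ∀ a, p a ↔ p (σ a) := by
  intro a
  by_cases hpa : p a
  · simp only [hpa, true_iff]
    by_contra hpsa
    have h1 : σ (σ a) = σ a := h (σ a) hpsa
    have h2 : σ a = a := σ.injective h1
    rw [h2] at hpsa
    exact hpsa hpa
  · rw [h a hpa]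

private lemma count_subtype (p : α → Prop) [DecidablePred p] :
    (univ.filter fun σ : Perm α =>
        (∀ a, ¬ p a → σ a = a) ∧ ∀ m ∈ σ.cycleType, Odd m).card
      = (univ.filter fun τ : Perm (Subtype p) => ∀ m ∈ τ.cycleType, Odd m).card := by
  refine Finset.card_bij' (fun σ hσ => σ.subtypePerm
      (fun a => (iff_of_fix (Finset.mem_filter.1 hσ).2.1 a).symm))
    (fun τ _ => ofSubtype τ) ?_ ?_ ?_ ?_
  · intro σ hσ
    obtain ⟨-, hfix, hodd⟩ := Finset.mem_filter.1 hσ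
    refine Finset.mem_filter.2 ⟨Finset.mem_univ _, ?_⟩
    have heq : ofSubtype (σ.subtypePerm (fun a => (iff_of_fix hfix a).symm)) = σ :=
      ofSubtype_subtypePerm _ (fun a ha => by_contra fun hpa => ha (hfix a hpa))
    intro m hm
    apply hodd
    rwa [← heq, cycleType_ofSubtype]
  · intro τ hτ
    obtain ⟨-, hodd⟩ := Finset.mem_filter.1 hτ
    refine Finset.mem_filter.2 ⟨Finset.mem_univ _, fun a ha => ofSubtype_apply_of_not_mem τ ha, ?_⟩
    intro m hm
    exact hodd m (by rwa [cycleType_ofSubtype] at hm)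
  · intro σ hσ
    exact ofSubtype_subtypePerm _ (fun a ha =>
      by_contra fun hpa => ha ((Finset.mem_filter.1 hσ).2.1 a hpa))
  · intro τ hτ
    exact subtypePerm_ofSubtype τ

private lemma count_fix_pair (x y : α) :
    (univ.filter fun τ : Perm α => τ x = x ∧ τ y = y ∧ ∀ m ∈ τ.cycleType, Odd m).card
      = (univ.filter fun ρ : Perm {a : α // a ≠ x ∧ a ≠ y} =>
          ∀ m ∈ ρ.cycleType, Odd m).card := by
  rw [← count_subtype (fun a => a ≠ x ∧ a ≠ y)]
  congr 1
  apply Finset.filter_congr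
  intro τ _
  constructor
  · rintro ⟨h1, h2, h3⟩
    refine ⟨fun a ha => ?_, h3⟩
    push_neg at ha
    rcases eq_or_ne a x with rfl | hax
    · exact h1
    · rw [ha hax]; exact h2
  · rintro ⟨hfix, h3⟩
    exact ⟨hfix x (by simp), hfix y (by simp), h3⟩



private lemma card_ne_pair (x y : α) (hxy : x ≠ y) : Fintype.card {a : α // a ≠ x ∧ a ≠ y}
    = Fintype.card α - 2 := by
  rw [Fintype.card_subtype]
  have h : (univ.filter fun a : α => a ≠ x ∧ a ≠ y) = (univ.erase y).erase x := by
    ext a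
    simp only [mem_filter, mem_univ, true_and, mem_erase]
    tauto
  rw [h, card_erase_of_mem (mem_erase.2 ⟨hxy, mem_univ x⟩), card_erase_of_mem (mem_univ y),
      card_univ]
  omega

private lemma apply_apply_ne {σ : Perm α} (hP : ∀ m ∈ σ.cycleType, Odd m) {x : α}
    (hx : σ x ≠ x) : σ (σ x) ≠ x := by
  intro h
  have hxs : x ≠ σ x := Ne.symm hx
  have hsw : Equiv.swap x (σ x) ∈ σ.cycleFactorsFinset := by
    rw [mem_cycleFactorsFinset_iff]
    refine ⟨isCycle_swap hxs, fun a ha => ?_⟩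
    rw [support_swap hxs, mem_insert, mem_singleton] at ha
    rcases ha with rfl | rfl
    · rw [swap_apply_left]
    · rw [swap_apply_right, h]
  have h2 : (2:ℕ) ∈ σ.cycleType := by
    rw [cycleType_def]
    exact Multiset.mem_map.2 ⟨_, hsw, by
      simp [card_support_swap hxs]⟩
  exact (by decide : ¬ Odd 2) (hP 2 h2)


private lemma main_count : ∀ (n : ℕ) (β : Type) [DecidableEq β] [Fintype β],
    Fintype.card β = n →
    (univ.filter fun σ : Perm β => ∀ m ∈ σ.cycleType, Odd m).card = Aseq n := by
  intro n
  induction n using Nat.strong_induction_on with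
  | _ n IH =>
  rcases n with _ | _ | n
  · intro β _ _ hβ
    haveI : IsEmpty β := Fintype.card_eq_zero_iff.mp hβ
    have hone : ∀ σ : Perm β, σ = 1 := fun σ => Equiv.ext fun a => (IsEmpty.false a).elim
    rw [filter_true_of_mem (fun σ _ => by rw [hone σ]; simp [cycleType_one]),
      Finset.card_univ, Fintype.card_perm, hβ]
    rfl
  · intro β _ _ hβ
    haveI : Subsingleton β := Fintype.card_le_one_iff_subsingleton.mp (by omega)
    have hone : ∀ σ : Perm β, σ = 1 := fun σ => Equiv.ext fun a => Subsingleton.elim _ _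
    rw [filter_true_of_mem (fun σ _ => by rw [hone σ]; simp [cycleType_one]),
      Finset.card_univ, Fintype.card_perm, hβ]
    rfl
  · intro β _ _ hβ
    obtain ⟨x⟩ : Nonempty β := Fintype.card_pos_iff.mp (by omega)
    have hsplit := Finset.card_filter_add_card_filter_not
      (s := univ.filter (fun σ : Perm β => ∀ m ∈ σ.cycleType, Odd m))
      (p := fun σ => σ x = x)
    rw [filter_filter, filter_filter] at hsplit
    have hF : (univ.filter fun σ : Perm β =>
        (∀ m ∈ σ.cycleType, Odd m) ∧ σ x = x).card = Aseq (n+1) := by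
      have heq : (univ.filter fun σ : Perm β => (∀ m ∈ σ.cycleType, Odd m) ∧ σ x = x)
          = univ.filter (fun σ : Perm β =>
            (∀ a, ¬ (a ≠ x) → σ a = a) ∧ ∀ m ∈ σ.cycleType, Odd m) := by
        apply filter_congr
        intro σ _
        constructor
        · rintro ⟨h1, h2⟩
          exact ⟨fun a ha => by rw [not_ne_iff.1 ha]; exact h2, h1⟩
        · rintro ⟨h1, h2⟩
          exact ⟨h2, h1 x (by simp)⟩
      rw [heq, count_subtype (fun a => a ≠ x)]
      refine IH (n+1) (by omega) _ ?_
      rw [Fintype.card_subtype]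
      have h2 : (univ.filter fun a : β => a ≠ x) = univ.erase x := by
        ext a; simp [mem_erase]
      rw [h2, card_erase_of_mem (mem_univ x), card_univ, hβ]
      omega
    set pr : Finset ((_ : β) × β) :=
      (univ.erase x).sigma (fun y => (univ.erase x).erase y) with hpr
    set C : Finset ((_ : (_ : β) × β) × Perm β) := pr.sigma (fun p => univ.filter
      (fun τ : Perm β => τ x = x ∧ τ p.1 = p.1 ∧ ∀ m ∈ τ.cycleType, Odd m)) with hC
    have hM : (univ.filter fun σ : Perm β =>
        (∀ m ∈ σ.cycleType, Odd m) ∧ ¬ σ x = x).card = C.card := by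
      refine Finset.card_bij'
        (fun σ _ => ⟨⟨σ x, σ⁻¹ x⟩, σ * (Equiv.swap (σ⁻¹ x) x * Equiv.swap x (σ x))⁻¹⟩)
        (fun t _ => t.2 * (Equiv.swap t.1.2 x * Equiv.swap x t.1.1)) ?_ ?_ ?_ ?_
      · intro σ hσ
        obtain ⟨-, hP, hx⟩ := mem_filter.1 hσ
        have hxy : x ≠ σ x := Ne.symm hx
        have hssx : σ (σ x) ≠ x := apply_apply_ne hP hx
        have hwx : σ⁻¹ x ≠ x := by
          intro h
          apply hx
          have h2 := congrArg σ h
          rw [← Perm.mul_apply, mul_inv_cancel, Perm.one_apply] at h2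
          exact h2.symm
        have hwy : σ⁻¹ x ≠ σ x := by
          intro h
          apply hssx
          have h2 := congrArg σ h
          rw [← Perm.mul_apply, mul_inv_cancel, Perm.one_apply] at h2
          exact h2.symm
        have hτx : (σ * (Equiv.swap (σ⁻¹ x) x * Equiv.swap x (σ x))⁻¹) x = x := by
          rw [mul_inv_rev, swap_inv, swap_inv, mul_apply, mul_apply, swap_apply_right,
            swap_apply_of_ne_of_ne hwx hwy, ← Perm.mul_apply, mul_inv_cancel, Perm.one_apply]
        have hτy : (σ * (Equiv.swap (σ⁻¹ x) x * Equiv.swap x (σ x))⁻¹) (σ x) = σ x := by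
          rw [mul_inv_rev, swap_inv, swap_inv, mul_apply, mul_apply,
            swap_apply_of_ne_of_ne (Ne.symm hwy) hx, swap_apply_right]
        have hAOτ : ∀ m ∈ (σ * (Equiv.swap (σ⁻¹ x) x * Equiv.swap x (σ x))⁻¹).cycleType,
            Odd m := by
          have hkey := ao_mul_insert (σ * (Equiv.swap (σ⁻¹ x) x * Equiv.swap x (σ x))⁻¹)
            x (σ x) (σ⁻¹ x) hxy hwx hwy hτx hτy
          rw [inv_mul_cancel_right] at hkey
          exact hkey.1 hP
        refine mem_sigma.2 ⟨mem_sigma.2 ⟨?_, ?_⟩, mem_filter.2 ⟨mem_univ _, hτx, hτy, hAOτ⟩⟩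
        · exact mem_erase.2 ⟨hx, mem_univ _⟩
        · exact mem_erase.2 ⟨hwy, mem_erase.2 ⟨hwx, mem_univ _⟩⟩
      · rintro ⟨⟨y, w⟩, τ⟩ ht
        obtain ⟨hp, hτ⟩ := mem_sigma.1 ht
        obtain ⟨hy, hw⟩ := mem_sigma.1 hp
        dsimp only at hy hw hτ ⊢
        have hyx : y ≠ x := (mem_erase.1 hy).1
        have hwy : w ≠ y := (mem_erase.1 hw).1
        have hwx : w ≠ x := (mem_erase.1 (mem_erase.1 hw).2).1
        obtain ⟨-, hτx, hτy, hAO⟩ := mem_filter.1 hτ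
        have hσx : (τ * (Equiv.swap w x * Equiv.swap x y)) x = y := by
          rw [mul_apply, mul_apply, swap_apply_left, swap_apply_of_ne_of_ne hwy.symm hyx, hτy]
        refine mem_filter.2 ⟨mem_univ _, ?_, ?_⟩
        · exact (ao_mul_insert τ x y w (Ne.symm hyx) hwx hwy hτx hτy).2 hAO
        · rw [hσx]; exact hyx
      · intro σ hσ
        exact inv_mul_cancel_right σ _
      · rintro ⟨⟨y, w⟩, τ⟩ ht
        obtain ⟨hp, hτ⟩ := mem_sigma.1 ht
        obtain ⟨hy, hw⟩ := mem_sigma.1 hp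
        dsimp only at hy hw hτ ⊢
        have hyx : y ≠ x := (mem_erase.1 hy).1
        have hwy : w ≠ y := (mem_erase.1 hw).1
        have hwx : w ≠ x := (mem_erase.1 (mem_erase.1 hw).2).1
        obtain ⟨-, hτx, hτy, hAO⟩ := mem_filter.1 hτ
        have h1 : (τ * (Equiv.swap w x * Equiv.swap x y)) x = y := by
          rw [mul_apply, mul_apply, swap_apply_left, swap_apply_of_ne_of_ne hwy.symm hyx, hτy]
        have hww : (τ * (Equiv.swap w x * Equiv.swap x y)) w = x := by
          rw [mul_apply, mul_apply, swap_apply_of_ne_of_ne hwx hwy, swap_apply_left, hτx]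
        have h2 : (τ * (Equiv.swap w x * Equiv.swap x y))⁻¹ x = w := by
          rw [Perm.inv_eq_iff_eq]
          exact hww.symm
        rw [h1, h2, mul_inv_cancel_right]
    have hCcard : C.card = (n+1) * n * Aseq n := by
      rw [hC, card_sigma]
      have hG : ∀ p ∈ pr, (univ.filter (fun τ : Perm β =>
          τ x = x ∧ τ p.1 = p.1 ∧ ∀ m ∈ τ.cycleType, Odd m)).card = Aseq n := by
        intro p hp
        obtain ⟨hy, -⟩ := mem_sigma.1 hp
        have hyx : p.1 ≠ x := (mem_erase.1 hy).1
        rw [count_fix_pair x p.1]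
        refine IH n (by omega) _ ?_
        rw [card_ne_pair x p.1 (Ne.symm hyx), hβ]
        omega
      rw [sum_congr rfl hG, sum_const, smul_eq_mul]
      have hprcard : pr.card = (n+1) * n := by
        rw [hpr, card_sigma]
        have h1 : ∀ y ∈ univ.erase x, ((univ.erase x).erase y).card = n := by
          intro y hy
          rw [card_erase_of_mem hy, card_erase_of_mem (mem_univ x), card_univ, hβ]
          omega
        rw [sum_congr rfl h1, sum_const, smul_eq_mul, card_erase_of_mem (mem_univ x),
          card_univ, hβ]
        rfl
      rw [hprcard]
    have : Aseq (n + 1 + 1) = Aseq (n+1) + (n+1) * n * Aseq n := rfl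
    rw [this, ← hsplit, hF, hM, hCcard]

private lemma t_count (β : Type) [DecidableEq β] [Fintype β] :
    2 * (univ.filter fun σ : Perm β =>
        σ.cycleType.count 2 = 1 ∧ ∀ m ∈ σ.cycleType, m ≠ 2 → Odd m).card
      = Fintype.card β * (Fintype.card β - 1) * Aseq (Fintype.card β - 2) := by
  classical
  set T := univ.filter fun σ : Perm β =>
      σ.cycleType.count 2 = 1 ∧ ∀ m ∈ σ.cycleType, m ≠ 2 → Odd m with hT
  set C2 : Finset ((_ : (_ : β) × β) × Perm β) :=
    ((univ : Finset β).sigma fun a => univ.erase a).sigma (fun p => univ.filter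
      fun τ : Perm β => τ p.1 = p.1 ∧ τ p.2 = p.2 ∧ ∀ m ∈ τ.cycleType, Odd m) with hC2
  have H1 : ∀ t ∈ C2, t.2 * Equiv.swap t.1.1 t.1.2 ∈ T := by
    rintro ⟨⟨a, b⟩, τ⟩ ht
    obtain ⟨hp, hτ⟩ := mem_sigma.1 ht
    obtain ⟨-, hb⟩ := mem_sigma.1 hp
    dsimp only at hb hτ ⊢
    have hba : b ≠ a := (mem_erase.1 hb).1
    have hab : a ≠ b := hba.symm
    obtain ⟨-, hτa, hτb, hAO⟩ := mem_filter.1 hτ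
    have hdisj : τ.Disjoint (Equiv.swap a b) := by
      intro z
      by_cases hz : z ∈ (Equiv.swap a b).support
      · left
        rw [support_swap hab, mem_insert, mem_singleton] at hz
        rcases hz with rfl | rfl <;> assumption
      · right; exact notMem_support.1 hz
    have hct : (τ * Equiv.swap a b).cycleType = τ.cycleType + ↑[2] := by
      rw [hdisj.cycleType_mul, (isCycle_swap hab).cycleType, card_support_swap hab]
      rfl
    refine mem_filter.2 ⟨mem_univ _, ?_, ?_⟩
    · rw [hct, Multiset.count_add]
      have h0 : τ.cycleType.count 2 = 0 := Multiset.count_eq_zero.2 (fun h => by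
        have := hAO 2 h
        rw [Nat.odd_iff] at this
        omega)
      rw [h0]
      rfl
    · intro m hm hm2
      rw [hct, Multiset.mem_add] at hm
      rcases hm with hm | hm
      · exact hAO m hm
      · simp only [Multiset.mem_coe, List.mem_singleton] at hm
        exact absurd hm hm2
  have H2 := Finset.card_eq_sum_card_fiberwise H1
  have H3 : ∀ σ ∈ T, (C2.filter fun t => t.2 * Equiv.swap t.1.1 t.1.2 = σ).card = 2 := by
    intro σ hσ
    obtain ⟨-, hc1, hc2⟩ := mem_filter.1 hσ
    have hc1' := hc1
    rw [cycleType_def, Multiset.count_map] at hc1'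
    obtain ⟨f, hf⟩ := Multiset.card_eq_one.1 hc1'
    have hfmem : f ∈ σ.cycleFactorsFinset.val := by
      have : f ∈ Multiset.filter (fun g => 2 = (Finset.card ∘ support) g)
          σ.cycleFactorsFinset.val := by rw [hf]; exact Multiset.mem_singleton_self f
      exact (Multiset.mem_filter.1 this).1
    have hfcard : (2:ℕ) = f.support.card := by
      have : f ∈ Multiset.filter (fun g => 2 = (Finset.card ∘ support) g)
          σ.cycleFactorsFinset.val := by rw [hf]; exact Multiset.mem_singleton_self f
      exact (Multiset.mem_filter.1 this).2
    have huniq : ∀ g ∈ σ.cycleFactorsFinset.val, g.support.card = 2 → g = f := by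
      intro g hg h2
      refine Multiset.mem_singleton.1 ?_
      rw [← hf]
      exact Multiset.mem_filter.2 ⟨hg, h2.symm⟩
    obtain ⟨a, b, hab, hfswap⟩ := card_support_eq_two.1 hfcard.symm
    have hfm : f ∈ σ.cycleFactorsFinset := hfmem
    obtain ⟨hfc, happ⟩ := mem_cycleFactorsFinset_iff.1 hfm
    have hσa : σ a = b := by
      rw [← happ a (by rw [hfswap, support_swap hab]; simp), hfswap, swap_apply_left]
    have hσb : σ b = a := by
      rw [← happ b (by rw [hfswap, support_swap hab]; simp), hfswap, swap_apply_right]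
    set τ0 := σ * Equiv.swap a b with hτ0
    have hτ0a : τ0 a = a := by rw [hτ0, mul_apply, swap_apply_left, hσb]
    have hτ0b : τ0 b = b := by rw [hτ0, mul_apply, swap_apply_right, hσa]
    have hdisj0 : τ0.Disjoint (Equiv.swap a b) := by
      have := disjoint_mul_inv_of_mem_cycleFactorsFinset hfm
      rwa [hfswap, swap_inv] at this
    have hστ0 : τ0 * Equiv.swap a b = σ := by
      rw [hτ0, mul_assoc, swap_mul_self, mul_one]
    have hctσ : σ.cycleType = τ0.cycleType + ↑[2] := by
      rw [← hστ0, hdisj0.cycleType_mul, (isCycle_swap hab).cycleType, card_support_swap hab]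
      rfl
    have hAO0 : ∀ m ∈ τ0.cycleType, Odd m := by
      intro m hm
      rcases eq_or_ne m 2 with rfl | hm2
      · exfalso
        rw [hctσ, Multiset.count_add] at hc1
        have h1c : τ0.cycleType.count 2 ≥ 1 := Multiset.one_le_count_iff_mem.2 hm
        have h2c : Multiset.count 2 (↑[2] : Multiset ℕ) = 1 := rfl
        omega
      · exact hc2 m (by rw [hctσ, Multiset.mem_add]; left; exact hm) hm2
    have hfib : (C2.filter fun t => t.2 * Equiv.swap t.1.1 t.1.2 = σ)
        = {⟨⟨a, b⟩, τ0⟩, ⟨⟨b, a⟩, τ0⟩} := by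
      ext t
      simp only [mem_filter, mem_insert, mem_singleton]
      constructor
      · rintro ⟨htm, htg⟩
        obtain ⟨⟨a', b'⟩, τ'⟩ := t
        obtain ⟨hp', hτ'⟩ := mem_sigma.1 htm
        obtain ⟨-, hb'⟩ := mem_sigma.1 hp'
        dsimp only at hb' hτ' htg ⊢
        have hb'a' : b' ≠ a' := (mem_erase.1 hb').1
        obtain ⟨-, hτ'a, hτ'b, hAO'⟩ := mem_filter.1 hτ'
        have hswfac : Equiv.swap a' b' ∈ σ.cycleFactorsFinset := by
          rw [mem_cycleFactorsFinset_iff]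
          refine ⟨isCycle_swap hb'a'.symm, fun z hz => ?_⟩
          rw [support_swap hb'a'.symm, mem_insert, mem_singleton] at hz
          rcases hz with rfl | rfl
          · rw [swap_apply_left, ← htg, mul_apply, swap_apply_left, hτ'b]
          · rw [swap_apply_right, ← htg, mul_apply, swap_apply_right, hτ'a]
        have hsweq : Equiv.swap a' b' = f :=
          huniq _ hswfac (card_support_swap hb'a'.symm)
        rw [hfswap] at hsweq
        have hτ'eq : τ' = τ0 := by
          rw [hτ0, ← htg, mul_assoc, hsweq, swap_mul_self, mul_one]
        have hb'val : Equiv.swap a b a' = b' := by rw [← hsweq, swap_apply_left]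
        rcases eq_or_ne a' a with rfl | ha'a
        · left
          rw [swap_apply_left] at hb'val
          rw [hτ'eq, ← hb'val]
        · rcases eq_or_ne a' b with rfl | ha'b
          · right
            rw [swap_apply_right] at hb'val
            rw [hτ'eq, ← hb'val]
          · exfalso
            rw [swap_apply_of_ne_of_ne ha'a ha'b] at hb'val
            exact hb'a' hb'val.symm
      · intro ht
        rcases ht with rfl | rfl
        · refine ⟨mem_sigma.2 ⟨mem_sigma.2 ⟨mem_univ _, mem_erase.2 ⟨hab.symm, mem_univ _⟩⟩,
            mem_filter.2 ⟨mem_univ _, hτ0a, hτ0b, hAO0⟩⟩, hστ0⟩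
        · refine ⟨mem_sigma.2 ⟨mem_sigma.2 ⟨mem_univ _, mem_erase.2 ⟨hab, mem_univ _⟩⟩,
            mem_filter.2 ⟨mem_univ _, hτ0b, hτ0a, hAO0⟩⟩, ?_⟩
          dsimp only
          rw [swap_comm, hστ0]
    rw [hfib, card_insert_of_notMem, card_singleton]
    intro h
    have := congrArg (fun t : ((_ : (_ : β) × β) × Perm β) => t.1.1) (mem_singleton.1 h)
    exact hab this
  have H4 : C2.card = 2 * T.card := by
    rw [H2, Finset.sum_congr rfl H3, Finset.sum_const, smul_eq_mul, mul_comm]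
  rw [← H4, hC2, card_sigma]
  have hG : ∀ p ∈ (univ : Finset β).sigma fun a => univ.erase a,
      (univ.filter fun τ : Perm β =>
        τ p.1 = p.1 ∧ τ p.2 = p.2 ∧ ∀ m ∈ τ.cycleType, Odd m).card
        = Aseq (Fintype.card β - 2) := by
    intro p hp
    obtain ⟨-, hb⟩ := mem_sigma.1 hp
    have hne : p.1 ≠ p.2 := ((mem_erase.1 hb).1).symm
    rw [count_fix_pair p.1 p.2]
    exact main_count _ _ (card_ne_pair p.1 p.2 hne)
  rw [sum_congr rfl hG, sum_const, smul_eq_mul, card_sigma]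
  have h1 : ∀ a ∈ (univ : Finset β), (univ.erase a).card = Fintype.card β - 1 := fun a _ => by
    rw [card_erase_of_mem (mem_univ a), card_univ]
  rw [sum_congr rfl h1, sum_const, smul_eq_mul, card_univ]

private lemma Aseq_closed (k : ℕ) :
    ((Aseq (2*k) : ℚ) * (2^k * (Nat.factorial k))^2 = ((Nat.factorial (2*k)))^2) ∧
    ((Aseq (2*k+1) : ℚ) * (2^k * (Nat.factorial k))^2
        = (Nat.factorial (2*k+1)) * (Nat.factorial (2*k))) := by
  induction k with
  | zero => norm_num [Aseq]
  | succ k ih =>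
    obtain ⟨he, ho⟩ := ih
    have hA2 : (Aseq (2*(k+1)) : ℚ) = Aseq (2*k+1) + (2*k+1)*(2*k)*Aseq (2*k) := by
      rw [show 2*(k+1) = (2*k)+2 by ring,
        show Aseq (2*k+2) = Aseq (2*k+1) + (2*k+1)*(2*k)*Aseq (2*k) from rfl]
      push_cast; ring
    have hA3 : (Aseq (2*(k+1)+1) : ℚ)
        = (Aseq (2*k+1) + (2*k+1)*(2*k)*Aseq (2*k)) + (2*k+2)*(2*k+1)*Aseq (2*k+1) := by
      rw [show 2*(k+1)+1 = (2*k+1)+2 by ring,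
        show Aseq ((2*k+1)+2) = Aseq (2*k+2) + (2*k+2)*(2*k+1)*Aseq (2*k+1) from rfl,
        show Aseq (2*k+2) = Aseq (2*k+1) + (2*k+1)*(2*k)*Aseq (2*k) from rfl]
      push_cast; ring
    have hf2 : ((Nat.factorial (2*(k+1)) : ℚ)) = (2*k+2)*(2*k+1)*(Nat.factorial (2*k)) := by
      rw [show 2*(k+1) = (2*k+1)+1 by ring, Nat.factorial_succ,
        show (2*k+1) = (2*k)+1 from rfl, Nat.factorial_succ]
      push_cast; ring
    have hf3 : ((Nat.factorial (2*(k+1)+1) : ℚ))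
        = (2*k+3)*(2*k+2)*(2*k+1)*(Nat.factorial (2*k)) := by
      rw [show 2*(k+1)+1 = ((2*k+1)+1)+1 by ring, Nat.factorial_succ, Nat.factorial_succ,
        show (2*k+1) = (2*k)+1 from rfl, Nat.factorial_succ]
      push_cast; ring
    have hk1 : ((Nat.factorial (k+1) : ℚ)) = (k+1)*(Nat.factorial k) := by
      rw [Nat.factorial_succ]; push_cast; ring
    have hodd1 : ((Nat.factorial (2*k+1) : ℚ)) = (2*k+1)*(Nat.factorial (2*k)) := by
      rw [show (2*k+1) = (2*k)+1 from rfl, Nat.factorial_succ]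
      push_cast; ring
    rw [hodd1] at ho
    constructor
    · rw [hA2, hf2, hk1]
      linear_combination (4*((k:ℚ)+1)^2) * ho + (4*((k:ℚ)+1)^2*(2*k+1)*(2*k)) * he
    · rw [hA3, hf3, hf2, hk1]
      linear_combination (4*((k:ℚ)+1)^2*(1+(2*(k:ℚ)+2)*(2*k+1))) * ho
        + (4*((k:ℚ)+1)^2*(2*k+1)*(2*k)) * he

/-- The proportion of permutations of `S_n` whose cycle decomposition contains
exactly one transposition and no other cycle of even length equals
`(n-2)!/(2^{n-1} ((n-2)/2)!²)` for `n` even, and `(n-3)!/(2^{n-2} ((n-3)/2)!²)`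
for `n` odd. -/
theorem stmt_4 (n : ℕ) (hn : 2 ≤ n) :
    (Even n →
      ((Finset.univ.filter fun σ : Equiv.Perm (Fin n) =>
          σ.cycleType.count 2 = 1 ∧ ∀ m ∈ σ.cycleType, m ≠ 2 → Odd m).card : ℚ)
          / (Nat.factorial n) =
        (Nat.factorial (n - 2) : ℚ) /
          (2 ^ (n - 1) * (Nat.factorial ((n - 2) / 2)) ^ 2)) ∧
    (Odd n →
      ((Finset.univ.filter fun σ : Equiv.Perm (Fin n) =>
          σ.cycleType.count 2 = 1 ∧ ∀ m ∈ σ.cycleType, m ≠ 2 → Odd m).card : ℚ)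
          / (Nat.factorial n) =
        (Nat.factorial (n - 3) : ℚ) /
          (2 ^ (n - 2) * (Nat.factorial ((n - 3) / 2)) ^ 2)) := by
  have ht := t_count (Fin n)
  rw [Fintype.card_fin] at ht
  set T := (Finset.univ.filter fun σ : Equiv.Perm (Fin n) =>
      σ.cycleType.count 2 = 1 ∧ ∀ m ∈ σ.cycleType, m ≠ 2 → Odd m).card with hTdef
  constructor
  · intro heven
    obtain ⟨m, hm⟩ := heven
    obtain ⟨k, rfl⟩ : ∃ k, n = 2*k+2 := ⟨m - 1, by omega⟩
    have h1 : 2*k+2-2 = 2*k := by omega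
    have h2 : 2*k+2-1 = 2*k+1 := by omega
    have h3 : (2*k)/2 = k := by omega
    rw [h1, h2] at ht
    rw [h1, h2, h3]
    have hQ : (2:ℚ) * T = (2*k+2) * (2*k+1) * Aseq (2*k) := by
      have := congrArg (fun x : ℕ => (x : ℚ)) ht
      push_cast at this
      linarith [this]
    have he := (Aseq_closed k).1
    rw [div_eq_div_iff (by positivity) (by positivity)]
    have hfact : ((Nat.factorial (2*k+2) : ℚ)) = (2*k+2)*(2*k+1)*(Nat.factorial (2*k)) := by
      rw [show 2*k+2 = (2*k+1)+1 from rfl, Nat.factorial_succ,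
        show (2*k+1) = (2*k)+1 from rfl, Nat.factorial_succ]
      push_cast; ring
    have h2q : (2:ℚ) ≠ 0 := by norm_num
    apply mul_left_cancel₀ h2q
    rw [hfact]
    linear_combination (2^(2*k+1) * ((Nat.factorial k):ℚ)^2) * hQ + (2*(2*(k:ℚ)+2)*(2*k+1)) * he
  · intro hodd
    obtain ⟨m, hm⟩ := hodd
    obtain ⟨k, rfl⟩ : ∃ k, n = 2*k+3 := ⟨m - 1, by omega⟩
    have h1 : 2*k+3-2 = 2*k+1 := by omega
    have h2 : 2*k+3-1 = 2*k+2 := by omega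
    have h3 : 2*k+3-3 = 2*k := by omega
    have h4 : (2*k)/2 = k := by omega
    rw [h1, h2] at ht
    rw [h3, h4, h1]
    have hQ : (2:ℚ) * T = (2*k+3) * (2*k+2) * Aseq (2*k+1) := by
      have := congrArg (fun x : ℕ => (x : ℚ)) ht
      push_cast at this
      linarith [this]
    have ho := (Aseq_closed k).2
    rw [div_eq_div_iff (by positivity) (by positivity)]
    have hfact : ((Nat.factorial (2*k+3) : ℚ))
        = (2*k+3)*(2*k+2)*(Nat.factorial (2*k+1)) := by
      rw [show 2*k+3 = (2*k+2)+1 from rfl, Nat.factorial_succ,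
        show (2*k+2) = (2*k+1)+1 from rfl, Nat.factorial_succ]
      push_cast; ring
    have hfact1 : ((Nat.factorial (2*k+1) : ℚ)) = (2*k+1)*(Nat.factorial (2*k)) := by
      rw [show (2*k+1) = (2*k)+1 from rfl, Nat.factorial_succ]
      push_cast; ring
    rw [hfact1] at ho
    have h2q : (2:ℚ) ≠ 0 := by norm_num
    apply mul_left_cancel₀ h2q
    rw [hfact, hfact1]
    linear_combination (2^(2*k+1) * ((Nat.factorial k):ℚ)^2) * hQ
      + (2*(2*(k:ℚ)+3)*(2*k+2)) * ho
end

section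
/- Let G be a transitive subgroup of S_n (n ≥ 2) that contains a transposition and contains a p-cycle for some prime p > n/2. Then G = S_n. -/
open Equiv Equiv.Perm Finset

/-- A transitive subgroup of `S_n` containing a transposition and a `p`-cycle
for some prime `p > n/2` is all of `S_n`. -/
theorem stmt_8 (n : ℕ) (hn : 2 ≤ n) (G : Subgroup (Equiv.Perm (Fin n)))
    (htrans : ∀ i j : Fin n, ∃ g ∈ G, g i = j)
    (hswap : ∃ g ∈ G, g.IsSwap)
    (p : ℕ) (hp : p.Prime) (hp2 : n < 2 * p)
    (hcycle : ∃ g ∈ G, g.IsCycle ∧ g.support.card = p) :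
    G = ⊤ := by
  classical
  -- the relation "equal or the swap lies in G"
  set r : Fin n → Fin n → Prop := fun i j => i = j ∨ Equiv.swap i j ∈ G with hrdef
  have hsymm : ∀ {i j}, r i j → r j i := by
    rintro i j (rfl | h)
    · exact Or.inl rfl
    · exact Or.inr (by rwa [Equiv.swap_comm])
  have hconj : ∀ g ∈ G, ∀ {i j}, r i j → r (g i) (g j) := by
    rintro g hg i j (rfl | h)
    · exact Or.inl rfl
    · exact Or.inr (by rw [Equiv.swap_apply_apply]; exact mul_mem (mul_mem hg h) (inv_mem hg))
  have htr : ∀ {i j k}, r i j → r j k → r i k := by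
    rintro i j k (rfl | hij) hjk
    · exact hjk
    · rcases hjk with rfl | hjk
      · exact Or.inr hij
      · rcases eq_or_ne i k with rfl | hik
        · exact Or.inl rfl
        · rcases eq_or_ne j k with rfl | hjk'
          · exact Or.inr hij
          · have h := hconj _ hij (Or.inr hjk : r j k)
            rwa [Equiv.swap_apply_right, Equiv.swap_apply_of_ne_of_ne hik.symm hjk'.symm] at h
  -- equivalence classes
  set C : Fin n → Finset (Fin n) := fun x => univ.filter (r x) with hCdef
  have memC : ∀ {x y}, y ∈ C x ↔ r x y := by intro x y; simp [hCdef]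
  have selfC : ∀ x, x ∈ C x := fun x => memC.2 (Or.inl rfl)
  have hmap : ∀ g ∈ G, ∀ x, C (g x) = (C x).image g := by
    intro g hg x
    ext y
    simp only [Finset.mem_image, memC]
    constructor
    · intro h
      refine ⟨g⁻¹ y, ?_, by simp⟩
      have h2 := hconj _ (inv_mem hg) h
      simpa using h2
    · rintro ⟨z, hz, rfl⟩
      exact hconj _ hg hz
  have hcard : ∀ g ∈ G, ∀ x, (C (g x)).card = (C x).card := by
    intro g hg x
    rw [hmap g hg x, Finset.card_image_of_injective _ g.injective]
  have hsame : ∀ x y, (C x).card = (C y).card := by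
    intro x y
    obtain ⟨g, hg, rfl⟩ := htrans x y
    exact (hcard g hg x).symm
  have hdisj : ∀ x y, C x = C y ∨ Disjoint (C x) (C y) := by
    intro x y
    rcases Finset.disjoint_or_nonempty_inter (C x) (C y) with h | ⟨z, hz⟩
    · exact Or.inr h
    · left
      rw [Finset.mem_inter] at hz
      have hxy : r x y := htr (memC.1 hz.1) (hsymm (memC.1 hz.2))
      ext w
      simp only [memC]
      exact ⟨fun h => htr (hsymm hxy) h, fun h => htr hxy h⟩
  -- classes have at least 2 elements
  obtain ⟨s, hsG, a, b, hab, rfl⟩ := hswap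
  have htwo : ∀ x, 2 ≤ (C x).card := by
    intro x
    rw [hsame x a]
    have : ({a, b} : Finset (Fin n)) ⊆ C a := by
      intro y hy
      rcases Finset.mem_insert.1 hy with rfl | hy
      · exact selfC y
      · rw [Finset.mem_singleton] at hy; subst hy
        exact memC.2 (Or.inr hsG)
    calc 2 = ({a, b} : Finset (Fin n)).card := (Finset.card_pair hab).symm
    _ ≤ (C a).card := Finset.card_le_card this
  -- the p-cycle
  obtain ⟨c, hcG, hcyc, hcp⟩ := hcycle
  have horder : orderOf c = p := by rw [hcyc.orderOf, hcp]
  have hcpow : ∀ k : ℕ, (c ^ k : Equiv.Perm (Fin n)) ∈ G := fun k => pow_mem hcG k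
  -- c fixes every class
  have hfix : ∀ x, C (c x) = C x := by
    intro x
    by_contra hne
    -- minimal period of the class C x under c
    have hQp : (C x).image (⇑(c ^ p)) = C x := by
      rw [← horder, pow_orderOf_eq_one]; simp
    have hexists : ∃ k, 0 < k ∧ (C x).image (⇑(c ^ k)) = C x := ⟨p, hp.pos, hQp⟩
    set k0 := Nat.find hexists with hk0def
    have hk0spec := Nat.find_spec hexists
    rw [← hk0def] at hk0spec
    obtain ⟨hk0pos, hQk0⟩ := hk0spec
    have hQadd : ∀ a b : ℕ, (C x).image (⇑(c ^ a)) = C x → (C x).image (⇑(c ^ b)) = C x →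
        (C x).image (⇑(c ^ (a + b))) = C x := by
      intro a b ha hb
      rw [pow_add, Equiv.Perm.coe_mul, ← Finset.image_image, hb, ha]
    have hQcancel : ∀ a b : ℕ, (C x).image (⇑(c ^ a)) = C x →
        (C x).image (⇑(c ^ (a + b))) = C x → (C x).image (⇑(c ^ b)) = C x := by
      intro a b ha hab
      have h1 : Finset.image (⇑(c ^ a)) ((C x).image (⇑(c ^ b)))
          = Finset.image (⇑(c ^ a)) (C x) := by
        rw [Finset.image_image, ← Equiv.Perm.coe_mul, ← pow_add, hab, ha]
      exact Finset.image_injective (c ^ a).injective h1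
    have hQmul : ∀ q : ℕ, (C x).image (⇑(c ^ (k0 * q))) = C x := by
      intro q
      induction q with
      | zero => simp
      | succ q ih =>
        have : k0 * (q + 1) = k0 * q + k0 := by ring
        rw [this]
        exact hQadd _ _ ih hQk0
    have hdvd : k0 ∣ p := by
      rcases Nat.eq_zero_or_pos (p % k0) with h0 | hpos
      · exact Nat.dvd_of_mod_eq_zero h0
      · exfalso
        have hQr : (C x).image (⇑(c ^ (p % k0))) = C x := by
          have := hQcancel (k0 * (p / k0)) (p % k0) (hQmul _)
            (by rw [Nat.div_add_mod]; exact hQp)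
          exact this
        have hlt : p % k0 < k0 := Nat.mod_lt _ hk0pos
        exact Nat.find_min hexists hlt ⟨hpos, hQr⟩
    rcases (hp.eq_one_or_self_of_dvd k0 hdvd) with h1 | hpk
    · -- k0 = 1 : c fixes the class, contradiction with hne
      apply hne
      rw [hmap c hcG x]
      have h2 := hQk0
      rw [h1, pow_one] at h2
      exact h2
    · -- k0 = p : the p classes C (c^i x) are pairwise disjoint, too many elements
      have hclass : ∀ k : ℕ, C ((c ^ k) x) = (C x).image (⇑(c ^ k)) := fun k =>
        hmap (c ^ k) (hcpow k) x
    -- distinct images for i < j < p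
      have hinj : ∀ i < p, ∀ j < p, i ≠ j → Disjoint (C ((c ^ i) x)) (C ((c ^ j) x)) := by
        have key : ∀ i j, i < j → j < p → C ((c ^ i) x) ≠ C ((c ^ j) x) := by
          intro i j hij hjp hEq
          rw [hclass i, hclass j] at hEq
          have h1 : Finset.image (⇑(c ^ i)) ((C x).image (⇑(c ^ (j - i))))
              = Finset.image (⇑(c ^ i)) (C x) := by
            rw [Finset.image_image, ← Equiv.Perm.coe_mul, ← pow_add,
              Nat.add_sub_cancel' hij.le, ← hEq]
          have hQd := Finset.image_injective (c ^ i).injective h1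
          have hmin : ¬ (0 < j - i ∧ (C x).image (⇑(c ^ (j - i))) = C x) :=
            Nat.find_min hexists (show j - i < Nat.find hexists by rw [← hk0def]; omega)
          exact hmin ⟨by omega, hQd⟩
        intro i hi j hj hij
        rcases (hdisj ((c ^ i) x) ((c ^ j) x)) with hEq | hd
        · exfalso
          rcases lt_or_gt_of_ne hij with h | h
          · exact key i j h hj hEq
          · exact key j i h hi hEq.symm
        · exact hd
      -- counting: p pairwise disjoint classes each of size ≥ 2
      have hbi := Finset.card_biUnion (s := Finset.range p)
        (t := fun i => C ((c ^ i) x))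
        (fun i hi j hj hij => hinj i (Finset.mem_range.1 hi) j (Finset.mem_range.1 hj) hij)
      have hle : ((Finset.range p).biUnion (fun i => C ((c ^ i) x))).card ≤ n := by
        calc ((Finset.range p).biUnion (fun i => C ((c ^ i) x))).card
            ≤ (Finset.univ : Finset (Fin n)).card := Finset.card_le_card (Finset.subset_univ _)
          _ = n := by simp
      have hge : 2 * p ≤ ∑ i ∈ Finset.range p, (C ((c ^ i) x)).card := by
        calc 2 * p = ∑ _i ∈ Finset.range p, 2 := by simp [mul_comm]
          _ ≤ ∑ i ∈ Finset.range p, (C ((c ^ i) x)).card :=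
            Finset.sum_le_sum (fun i _ => htwo _)
      have hsum : (∑ i ∈ Finset.range p, (C ((c ^ i) x)).card) ≤ n := by
        rw [← hbi]; exact hle
      omega
  -- every class is fixed by all powers of c
  have hfixpow : ∀ (k : ℕ) (x : Fin n), (c ^ k) x ∈ C x := by
    intro k x
    induction k with
    | zero => simpa using selfC x
    | succ k ih =>
      have h1 : (c ^ (k + 1)) x = c ((c ^ k) x) := by
        rw [pow_succ']; rfl
      rw [h1]
      have h2 : C (c ((c ^ k) x)) = C ((c ^ k) x) := hfix _
      have h3 : c ((c ^ k) x) ∈ C ((c ^ k) x) := by rw [← h2]; exact selfC _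
      have h4 : C ((c ^ k) x) = C x := by
        rcases hdisj ((c ^ k) x) x with h | h
        · exact h
        · exact (Finset.disjoint_left.1 h (selfC _) ih).elim
      rwa [h4] at h3
  -- pick a point in the support of c; its class has ≥ p elements
  have hsupp : c.support.Nonempty := Finset.card_pos.1 (by rw [hcp]; exact hp.pos)
  obtain ⟨x, hx⟩ := hsupp
  have hpcard : p ≤ (C x).card := by
    have key : ∀ i j : ℕ, i < j → j < p → (c ^ i) x ≠ (c ^ j) x := by
      intro i j h hjp hij
      exfalso
      have h1 : (c ^ (j - i)) x = x := by
        have heq : (c ^ i)⁻¹ ((c ^ j) x) = (c ^ i)⁻¹ ((c ^ i) x) := by rw [← hij]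
        rw [Equiv.Perm.inv_def, Equiv.symm_apply_apply] at heq
        have h2 : (c ^ i)⁻¹ * c ^ j = c ^ (j - i) := by
          rw [inv_mul_eq_iff_eq_mul, ← pow_add, Nat.add_sub_cancel' h.le]
        calc (c ^ (j - i)) x = ((c ^ i)⁻¹ * c ^ j) x := by rw [h2]
          _ = (c ^ i)⁻¹ ((c ^ j) x) := rfl
          _ = x := heq
      have hx' : c x ≠ x := Equiv.Perm.mem_support.1 hx
      have h3 : c ^ (j - i) = 1 := (hcyc.pow_eq_one_iff' hx').2 h1
      have h4 : p ∣ (j - i) := horder ▸ orderOf_dvd_of_pow_eq_one h3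
      have h5 := Nat.le_of_dvd (by omega) h4
      omega
    have hinj : Set.InjOn (fun k : ℕ => (c ^ k) x) (Finset.range p) := by
      intro i hi j hj hij
      simp only [Finset.coe_range, Set.mem_Iio] at hi hj
      rcases lt_trichotomy i j with h | h | h
      · exact absurd hij (key i j h hj)
      · exact h
      · exact absurd hij.symm (key j i h hi)
    have hsub : (Finset.range p).image (fun k : ℕ => (c ^ k) x) ⊆ C x := by
      intro y hy
      obtain ⟨k, _, rfl⟩ := Finset.mem_image.1 hy
      exact hfixpow k x
    calc p = (Finset.range p).card := (Finset.card_range p).symm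
      _ = ((Finset.range p).image (fun k : ℕ => (c ^ k) x)).card :=
        (Finset.card_image_of_injOn hinj).symm
      _ ≤ (C x).card := Finset.card_le_card hsub
  -- hence every class has ≥ p elements, so there is a unique class
  have hall : ∀ y z : Fin n, r y z := by
    intro y z
    by_contra hryz
    have hne : C y ≠ C z := by
      intro h
      exact hryz (memC.1 (h ▸ selfC z))
    have hd : Disjoint (C y) (C z) := (hdisj y z).resolve_left hne
    have h1 : (C y ∪ C z).card = (C y).card + (C z).card := Finset.card_union_of_disjoint hd
    have h2 : (C y ∪ C z).card ≤ n := by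
      calc (C y ∪ C z).card ≤ (Finset.univ : Finset (Fin n)).card :=
        Finset.card_le_card (Finset.subset_univ _)
        _ = n := by simp
    have h3 : p ≤ (C y).card := (hsame y x) ▸ hpcard
    have h4 : p ≤ (C z).card := (hsame z x) ▸ hpcard
    omega
  -- all transpositions lie in G, hence G = ⊤
  rw [eq_top_iff, ← Equiv.Perm.closure_isSwap, Subgroup.closure_le]
  rintro σ ⟨u, v, huv, rfl⟩
  exact (hall u v).resolve_left huv
end

section
/- If G is a primitive subgroup of S_n containing a transposition, then G = S_n. -/
open scoped Pointwise

/-- Jordan's theorem: a primitive subgroup of `S_n` containing a transposition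
is all of `S_n`.  Primitivity is stated as: `G` is transitive and every block
for the action of `G` on `Fin n` is trivial. -/
theorem stmt_9 (n : ℕ) (hn : 2 ≤ n) (G : Subgroup (Equiv.Perm (Fin n)))
    (htrans : ∀ i j : Fin n, ∃ g ∈ G, g i = j)
    (hblocks : ∀ B : Set (Fin n), MulAction.IsBlock G B →
      B.Subsingleton ∨ B = Set.univ)
    (hswap : ∃ g ∈ G, g.IsSwap) :
    G = ⊤ := by
  obtain ⟨g, hgG, x, y, hxy, rfl⟩ := hswap
  -- the relation
  set r : Fin n → Fin n → Prop := fun i j => i = j ∨ Equiv.swap i j ∈ G with hr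
  have rsymm : ∀ {i j}, r i j → r j i := by
    rintro i j (rfl | h)
    · exact Or.inl rfl
    · exact Or.inr (by rwa [Equiv.swap_comm])
  have rtrans : ∀ {i j k}, r i j → r j k → r i k := by
    rintro i j k (rfl | hij) (rfl | hjk)
    · exact Or.inl rfl
    · exact Or.inr hjk
    · exact Or.inr hij
    · rcases eq_or_ne i k with rfl | hik
      · exact Or.inl rfl
      · refine Or.inr ?_
        rcases eq_or_ne k j with rfl | hkj
        · exact hij
        rcases eq_or_ne i j with rfl | hij'
        · exact hjk
        have : Equiv.swap i k = Equiv.swap i j * Equiv.swap j k * (Equiv.swap i j)⁻¹ := by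
          rw [← Equiv.swap_apply_apply, Equiv.swap_apply_right,
            Equiv.swap_apply_of_ne_of_ne hik.symm hkj]
        rw [this]
        exact G.mul_mem (G.mul_mem hij hjk) (G.inv_mem hij)
  have rinv : ∀ (g : Equiv.Perm (Fin n)), g ∈ G → ∀ {i j}, r i j → r (g i) (g j) := by
    rintro g hg i j (rfl | h)
    · exact Or.inl rfl
    · refine Or.inr ?_
      rw [Equiv.swap_apply_apply]
      exact G.mul_mem (G.mul_mem hg h) (G.inv_mem hg)
  -- classes
  set B : Fin n → Set (Fin n) := fun i => {j | r i j} with hB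
  have hsmul : ∀ (g : G) (i : Fin n), (g : Equiv.Perm (Fin n)) • B i = B ((g : Equiv.Perm (Fin n)) i) := by
    intro g i
    ext j
    constructor
    · rintro ⟨k, hk, rfl⟩
      exact rinv g g.2 hk
    · intro hj
      refine ⟨(g : Equiv.Perm (Fin n))⁻¹ j, ?_, by simp⟩
      have := rinv _ (G.inv_mem g.2) hj
      simp at this
      exact this
  have hclass_eq : ∀ {i j}, r i j → B i = B j := by
    intro i j hij
    ext k
    exact ⟨fun hk => rtrans (rsymm hij) hk, fun hk => rtrans hij hk⟩
  have hblock : MulAction.IsBlock G (B x) := by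
    intro g₁ g₂ hne
    have h1 : g₁ • B x = B ((g₁ : Equiv.Perm (Fin n)) x) := hsmul g₁ x
    have h2 : g₂ • B x = B ((g₂ : Equiv.Perm (Fin n)) x) := hsmul g₂ x
    rw [h1, h2] at hne ⊢
    rw [Set.disjoint_left]
    intro a ha ha'
    exact hne (hclass_eq (rtrans ha (rsymm ha')))
  rcases hblocks (B x) hblock with hsub | huniv
  · exact absurd (hsub (Or.inl rfl) (Or.inr hgG)) hxy
  · -- all transpositions are in G
    have hall : ∀ i j : Fin n, i ≠ j → Equiv.swap i j ∈ G := by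
      intro i j hij
      have hi : r x i := show i ∈ B x from huniv.symm ▸ Set.mem_univ i
      have hj : r x j := show j ∈ B x from huniv.symm ▸ Set.mem_univ j
      rcases rtrans (rsymm hi) hj with h | h
      · exact absurd h hij
      · exact h
    rw [eq_top_iff, ← Equiv.Perm.closure_isSwap, Subgroup.closure_le]
    rintro σ ⟨i, j, hij, rfl⟩
    exact hall i j hij
end
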